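/- Let E be a finite-dimensional complex inner product space, let A be a self-adjoint operator on E, let v be a unit eigenvector of A with eigenvalue λ, and let γ > 0 be such that ⟨x, A x⟩ ≥ (λ + γ)‖x‖² for every vector x orthogonal to v. If w is a unit vector with ⟨w, A w⟩ ≤ λ + 2δ for some δ ≥ 0, then |⟨w, v⟩|² ≥ 1 − 2δ/γ. -/

import Mathlib

/-- If `v` is a unit eigenvector of the self-adjoint operator `A` with eigenvalue
`λ`, the Rayleigh quotient of `A` is at least `λ + γ` on the orthogonal
complement of `v`, and `w` is a unit vector with `⟨w, A w⟩ ≤ λ + 2δ`, then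
`|⟨w, v⟩|² ≥ 1 − 2δ/γ`. -/
theorem rayleigh_quotient_fidelity
    {E : Type*} [NormedAddCommGroup E] [InnerProductSpace ℂ E] [FiniteDimensional ℂ E]
    (A : E →L[ℂ] E) (hA : IsSelfAdjoint A)
    (v : E) (hv : ‖v‖ = 1) (lam : ℝ) (heig : A v = (lam : ℂ) • v)
    (γ : ℝ) (hγ : 0 < γ)
    (hgap : ∀ x : E, (inner ℂ v x : ℂ) = 0 → (lam + γ) * ‖x‖ ^ 2 ≤ (inner ℂ x (A x) : ℂ).re)
    (w : E) (hw : ‖w‖ = 1) (δ : ℝ) (hδ : 0 ≤ δ)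
    (hray : (inner ℂ w (A w) : ℂ).re ≤ lam + 2 * δ) :
    1 - 2 * δ / γ ≤ ‖(inner ℂ w v : ℂ)‖ ^ 2 := by
  set c : ℂ := inner ℂ v w with hc
  set x : E := w - c • v with hx
  have hvv : (inner ℂ v v : ℂ) = 1 := by
    rw [inner_self_eq_norm_sq_to_K, hv]; norm_num
  have hvx : (inner ℂ v x : ℂ) = 0 := by
    simp [hx, inner_sub_right, inner_smul_right, hvv, hc, hv]
  have hxv : (inner ℂ x v : ℂ) = 0 := by
    rw [← inner_conj_symm, hvx]; simp
  have hdecomp : w = c • v + x := by rw [hx]; abel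
  have hcvx : (inner ℂ (c • v) x : ℂ) = 0 := by
    rw [inner_smul_left, hvx, mul_zero]
  have hw2 : ‖c‖ ^ 2 + ‖x‖ ^ 2 = 1 := by
    have h := norm_add_sq (𝕜 := ℂ) (c • v) x
    rw [← hdecomp, hcvx, hw] at h
    simp [norm_smul, hv, mul_pow] at h
    linarith
  have hvAx : (inner ℂ v (A x) : ℂ) = 0 := by
    have hsym : (A : E →ₗ[ℂ] E).IsSymmetric := by
      rwa [← ContinuousLinearMap.isSelfAdjoint_iff_isSymmetric]
    have h1 : (inner ℂ (A v) x : ℂ) = inner ℂ v (A x) := hsym v x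
    rw [← h1, heig, inner_smul_left, hvx, mul_zero]
  have hAw : A w = (c * lam) • v + A x := by
    rw [hdecomp, map_add, map_smul, heig, smul_smul]
  have hcc : (starRingEnd ℂ) c * c = (‖c‖ : ℂ) ^ 2 := by
    rw [RCLike.conj_mul]; norm_cast
  have hinner : (inner ℂ w (A w) : ℂ) = ((‖c‖ : ℂ) ^ 2 * lam) + inner ℂ x (A x) := by
    rw [hAw, hdecomp]
    rw [inner_add_left, inner_add_right, inner_add_right]
    simp only [inner_smul_left, inner_smul_right, hvv, hvAx, hxv, mul_one,
      mul_zero, add_zero, zero_add]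
    linear_combination (↑lam : ℂ) * hcc
  have hre : (inner ℂ w (A w) : ℂ).re = ‖c‖ ^ 2 * lam + (inner ℂ x (A x) : ℂ).re := by
    rw [hinner, Complex.add_re, ← Complex.ofReal_pow, ← Complex.ofReal_mul,
      Complex.ofReal_re]
  have hgapx := hgap x hvx
  have hclam : ‖c‖ ^ 2 * lam = lam - ‖x‖ ^ 2 * lam := by linear_combination lam * hw2
  have hlow : lam + γ * ‖x‖ ^ 2 ≤ (inner ℂ w (A w) : ℂ).re := by
    rw [hre, hclam]; nlinarith [hgapx]
  have hxsmall : ‖x‖ ^ 2 ≤ 2 * δ / γ := by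
    rw [le_div_iff₀ hγ]
    nlinarith [hlow, hray]
  have hwv : ‖(inner ℂ w v : ℂ)‖ = ‖c‖ := by
    rw [hc]; exact norm_inner_symm w v
  rw [hwv]
  linarith
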